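/- Let A, B be associative conformal algebras, and let L = ⊕_{i≥0} L^i with L^i spanned by conformal sesquilinear maps from tensor products of copies of A and B (with at least one B factor and total degree i+1) to A. Then L is closed under the Gerstenhaber bracket and closed under the differential d̄ = [m_A + m_B, −] on the Hochschild complex of A ⊕ B, hence (L, [−,−], d̄) is a differential graded Lie subalgebra; moreover its degree 0 part L⁰ = Hom_{k[∂]}(B,A) is an abelian Lie algebra. -/

import Mathlib

structure AssocConformalAlg (k : Type*) [Field k] (A : Type*) [AddCommGroup A] [Module k A] where
  D : A →ₗ[k] A
  mul : k → A →ₗ[k] A →ₗ[k] A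
  conf_left : ∀ (l : k) (a b : A), mul l (D a) b = -(l • mul l a b)
  conf_right : ∀ (l : k) (a b : A), mul l a (D b) = D (mul l a b) + l • mul l a b
  assoc : ∀ (l m : k) (a b c : A), mul (l + m) (mul l a b) c = mul l a (mul m b c)

abbrev RawCochain (k : Type*) (E : Type*) := (ℕ → k) → (ℕ → E) → E

def gComp {k : Type*} [Field k] {E : Type*} [AddCommGroup E] (q i : ℕ)
    (f g : RawCochain k E) : RawCochain k E :=
  fun Λ a =>
    f (fun j => if j < i then Λ j
        else if j = i then ∑ t ∈ Finset.range (q + 1), Λ (i + t)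
        else Λ (j + q))
      (fun j => if j < i then a j
        else if j = i then g (fun t => Λ (i + t)) (fun t => a (i + t))
        else a (j + q))

def gBullet {k : Type*} [Field k] {E : Type*} [AddCommGroup E] (p q : ℕ)
    (f g : RawCochain k E) : RawCochain k E :=
  ∑ i ∈ Finset.range (p + 1), ((-1 : ℤ) ^ (q * i)) • gComp q i f g

def gBra {k : Type*} [Field k] {E : Type*} [AddCommGroup E] (p q : ℕ)
    (f g : RawCochain k E) : RawCochain k E :=
  gBullet p q f g - ((-1 : ℤ) ^ (p * q)) • gBullet q p g f

def muE {k : Type*} [Field k] {A B : Type*}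
    [AddCommGroup A] [Module k A] [AddCommGroup B] [Module k B]
    (SA : AssocConformalAlg k A) (SB : AssocConformalAlg k B) : RawCochain k (A × B) :=
  fun Λ a => (SA.mul (Λ 0) (a 0).1 (a 1).1, SB.mul (Λ 0) (a 0).2 (a 1).2)

def trip2 {k : Type*} [Field k] {A B : Type*}
    [AddCommGroup A] [Module k A] [AddCommGroup B] [Module k B]
    (lact : k → B →ₗ[k] A →ₗ[k] A) (ract : k → A →ₗ[k] B →ₗ[k] A)
    (chi : k → B →ₗ[k] B →ₗ[k] A) : RawCochain k (A × B) :=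
  fun Λ a =>
    (lact (Λ 0) (a 0).2 (a 1).1 + ract (Λ 0) (a 0).1 (a 1).2 + chi (Λ 0) (a 0).2 (a 1).2, 0)

/-- Membership in the graded subspace `L`: `A`-valued cochains on `A ⊕ B` that vanish on
tuples of elements of `A` (i.e. cochains with at least one `B`-argument). -/
def InL {k : Type*} {A B : Type*} [AddCommGroup A] [AddCommGroup B]
    (φ : RawCochain k (A × B)) : Prop :=
  (∀ Λ a, (φ Λ a).2 = 0) ∧ (∀ Λ a, (∀ j, (a j).2 = 0) → φ Λ a = 0)

set_option linter.unusedSectionVars false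

section Aux
variable {k : Type*} [Field k] {A B : Type*}
  [AddCommGroup A] [Module k A] [AddCommGroup B] [Module k B]

lemma InL.zsmul' {φ : RawCochain k (A × B)} (h : InL φ) (z : ℤ) : InL (z • φ) := by
  constructor
  · intro Λ a; simp [h.1]
  · intro Λ a ha; simp [h.2 Λ a ha]

lemma InL.sum' {ι : Type*} (s : Finset ι) (F : ι → RawCochain k (A × B))
    (h : ∀ i ∈ s, InL (F i)) : InL (∑ i ∈ s, F i) := by
  constructor
  · intro Λ a
    simp only [Finset.sum_apply, Prod.snd_sum]
    exact Finset.sum_eq_zero fun i hi => (h i hi).1 Λ a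
  · intro Λ a ha
    simp only [Finset.sum_apply]
    exact Finset.sum_eq_zero fun i hi => (h i hi).2 Λ a ha

lemma InL.sub' {φ ψ : RawCochain k (A × B)} (hφ : InL φ) (hψ : InL ψ) : InL (φ - ψ) := by
  constructor
  · intro Λ a; simp [hφ.1, hψ.1]
  · intro Λ a ha; simp [hφ.2 Λ a ha, hψ.2 Λ a ha]

lemma inL_gComp {q i : ℕ} {f g : RawCochain k (A × B)} (hf : InL f) (hg : InL g) :
    InL (gComp q i f g) := by
  constructor
  · intro Λ a; exact hf.1 _ _
  · intro Λ a ha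
    apply hf.2
    intro j
    split_ifs with h1 h2
    · exact ha j
    · rw [hg.2 _ _ (fun t => ha (i + t))]; rfl
    · exact ha (j + q)

lemma inL_gComp_mu_left (SA : AssocConformalAlg k A) (SB : AssocConformalAlg k B)
    {p i : ℕ} (hi : i < 2) {f : RawCochain k (A × B)} (hf : InL f) :
    InL (gComp p i (muE SA SB) f) := by
  interval_cases i
  · constructor
    · intro Λ a; simp [gComp, muE, hf.1]
    · intro Λ a ha
      have hfz : f Λ a = 0 := hf.2 _ _ ha
      simp [gComp, muE, hfz, ha]
  · constructor
    · intro Λ a; simp [gComp, muE, hf.1]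
    · intro Λ a ha
      have hfz : f (fun t => Λ (1 + t)) (fun t => a (1 + t)) = 0 :=
        hf.2 _ _ (fun t => ha (1 + t))
      simp [gComp, muE, hfz, ha]

lemma inL_gComp_mu_right (SA : AssocConformalAlg k A) (SB : AssocConformalAlg k B)
    {i : ℕ} {f : RawCochain k (A × B)} (hf : InL f) :
    InL (gComp 1 i f (muE SA SB)) := by
  constructor
  · intro Λ a; exact hf.1 _ _
  · intro Λ a ha
    apply hf.2
    intro j
    split_ifs with h1 h2
    · exact ha j
    · simp [muE, ha]
    · exact ha (j + 1)
end Aux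

/-- `L` is closed under the Gerstenhaber bracket and under the differential
`d̄ = [m_A + m_B, -]`, hence a differential graded Lie subalgebra; its degree-0 part
`Hom_{k[∂]}(B,A)` is abelian. -/
theorem stmt_13 (k : Type*) [Field k] [IsAlgClosed k] [CharZero k]
    (A B : Type*) [AddCommGroup A] [Module k A] [AddCommGroup B] [Module k B]
    (SA : AssocConformalAlg k A) (SB : AssocConformalAlg k B) :
    (∀ (p q : ℕ) (f g : RawCochain k (A × B)),
      InL f → InL g → InL (gBra p q f g)) ∧
    (∀ (p : ℕ) (f : RawCochain k (A × B)),
      InL f → InL (gBra 1 p (muE SA SB) f)) ∧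
    (∀ F G : A × B → A × B,
      ((∀ x, (F x).2 = 0) ∧ ∀ x : A × B, x.2 = 0 → F x = 0) →
      ((∀ x, (G x).2 = 0) ∧ ∀ x : A × B, x.2 = 0 → G x = 0) →
      gBra (k := k) 0 0 (fun (_ : ℕ → k) (a : ℕ → A × B) => F (a 0))
        (fun (_ : ℕ → k) (a : ℕ → A × B) => G (a 0)) = 0) := by
  refine ⟨?_, ?_, ?_⟩
  · intro p q f g hf hg
    apply InL.sub'
    · exact InL.sum' _ _ fun i _ => (inL_gComp hf hg).zsmul' _
    · apply InL.zsmul'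
      exact InL.sum' _ _ fun i _ => (inL_gComp hg hf).zsmul' _
  · intro p f hf
    apply InL.sub'
    · refine InL.sum' _ _ fun i hi => ?_
      exact (inL_gComp_mu_left SA SB (Finset.mem_range.mp hi) hf).zsmul' _
    · apply InL.zsmul'
      exact InL.sum' _ _ fun i _ => (inL_gComp_mu_right SA SB hf).zsmul' _
  · intro F G hF hG
    funext Λ a
    have h1 : F (G (a 0)) = 0 := hF.2 _ (hG.1 _)
    have h2 : G (F (a 0)) = 0 := hG.2 _ (hF.1 _)
    simp [gBra, gBullet, gComp, h1, h2]
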